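/- Let x* ∈ X and set y* := y(x*). Then x* is S-stationary for (SPO) if and only if (x*, y*) is a KKT point of (SPOref). -/

import Mathlib

open Filter Topology

noncomputable section

/-- Euclidean n-space. -/
abbrev E (n : ℕ) : Type := EuclideanSpace ℝ (Fin n)

/-- The SP-Lagrangian L(x, λ, μ) = f(x) + λᵀg(x) + μᵀh(x). -/
def LSP {n m q : ℕ} (f : E n → ℝ) (g : Fin m → E n → ℝ) (h : Fin q → E n → ℝ)
    (lam : Fin m → ℝ) (mu : Fin q → ℝ) (x : E n) : ℝ :=
  f x + (∑ i, lam i * g i x) + (∑ j, mu j * h j x)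

/-- S-stationarity of x* for (SPO). -/
def SStat {n m q : ℕ} (f : E n → ℝ) (g : Fin m → E n → ℝ) (h : Fin q → E n → ℝ)
    (xstar : E n) : Prop :=
  ∃ (lam : Fin m → ℝ) (mu : Fin q → ℝ),
    (∀ i, 0 ≤ lam i) ∧ (∀ i, lam i * g i xstar = 0) ∧
    ∀ i, xstar i ≠ 0 → gradient (LSP f g h lam mu) xstar i = 0

/-- KKT point of the reformulation (SPOref). -/
def KKTref {n m q : ℕ} (f : E n → ℝ) (g : Fin m → E n → ℝ) (h : Fin q → E n → ℝ)
    (p : Fin n → ℝ → ℝ) (x y : E n) : Prop :=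
  (∀ i, g i x ≤ 0) ∧ (∀ j, h j x = 0) ∧ (∀ i, 0 ≤ x i) ∧ (∀ i, x i * y i = 0) ∧
  ∃ (lam : Fin m → ℝ) (mu : Fin q → ℝ) (ν γ : Fin n → ℝ),
    (∀ i, 0 ≤ lam i) ∧ (∀ i, lam i * g i x = 0) ∧
    (∀ i, 0 ≤ ν i) ∧ (∀ i, ν i * x i = 0) ∧
    (∀ k, gradient f x k + (∑ i, lam i * gradient (g i) x k) +
        (∑ j, mu j * gradient (h j) x k) - ν k + γ k * y k = 0) ∧
    (∀ i, deriv (p i) (y i) + γ i * x i = 0)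

lemma gradLSP {n m q : ℕ} (f : E n → ℝ) (g : Fin m → E n → ℝ) (h : Fin q → E n → ℝ)
    (hf : ContDiff ℝ 1 f) (hg : ∀ i, ContDiff ℝ 1 (g i)) (hh : ∀ j, ContDiff ℝ 1 (h j))
    (lam : Fin m → ℝ) (mu : Fin q → ℝ) (x : E n) (k : Fin n) :
    gradient (LSP f g h lam mu) x k =
      gradient f x k + (∑ i, lam i * gradient (g i) x k) +
        (∑ j, mu j * gradient (h j) x k) := by
  have Hf : HasGradientAt f (gradient f x) x :=
    (hf.differentiable one_ne_zero x).hasGradientAt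
  have Hg : ∀ i, HasGradientAt (g i) (gradient (g i) x) x := fun i =>
    ((hg i).differentiable one_ne_zero x).hasGradientAt
  have Hh : ∀ j, HasGradientAt (h j) (gradient (h j) x) x := fun j =>
    ((hh j).differentiable one_ne_zero x).hasGradientAt
  have HF : HasFDerivAt (LSP f g h lam mu)
      ((InnerProductSpace.toDual ℝ (E n)) (gradient f x +
        (∑ i, lam i • gradient (g i) x) + (∑ j, mu j • gradient (h j) x))) x := by
    simp only [hasGradientAt_iff_hasFDerivAt] at Hf Hg Hh
    have HG : HasFDerivAt (fun y => ∑ i, lam i * g i y)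
        (∑ i, lam i • (InnerProductSpace.toDual ℝ (E n)) (gradient (g i) x)) x :=
      HasFDerivAt.fun_sum (fun i _ => (Hg i).const_mul (lam i))
    have HH : HasFDerivAt (fun y => ∑ j, mu j * h j y)
        (∑ j, mu j • (InnerProductSpace.toDual ℝ (E n)) (gradient (h j) x)) x :=
      HasFDerivAt.fun_sum (fun j _ => (Hh j).const_mul (mu j))
    have := (Hf.fun_add HG).fun_add HH
    show HasFDerivAt (fun y => f y + (∑ i, lam i * g i y) + (∑ j, mu j * h j y)) _ x
    simpa [LSP, map_add, map_sum, map_smul] using this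
  have : gradient (LSP f g h lam mu) x =
      gradient f x + (∑ i, lam i • gradient (g i) x) + (∑ j, mu j • gradient (h j) x) := by
    have := (hasGradientAt_iff_hasFDerivAt.mpr HF)
    exact this.gradient
  rw [this]
  have e1 := Finset.sum_apply k Finset.univ (fun i => lam i • gradient (g i) x)
  have e2 := Finset.sum_apply k Finset.univ (fun j => mu j • gradient (h j) x)
  simp only [PiLp.add_apply]
  rw [WithLp.ofLp_sum, WithLp.ofLp_sum, e1, e2]
  simp [smul_eq_mul]

/-- Let x* ∈ X and y* := y(x*).  Then x* is S-stationary for (SPO)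
if and only if (x*, y*) is a KKT point of (SPOref). -/
theorem stmt_5 {n m q : ℕ} (hn : 1 ≤ n) {ρ : ℝ} (hρ : 0 < ρ)
    (f : E n → ℝ) (g : Fin m → E n → ℝ) (h : Fin q → E n → ℝ)
    (hf : ContDiff ℝ 1 f) (hg : ∀ i, ContDiff ℝ 1 (g i)) (hh : ∀ j, ContDiff ℝ 1 (h j))
    (p : Fin n → ℝ → ℝ) (s : Fin n → ℝ)
    (hp : ∀ i, ContDiff ℝ 1 (p i))
    (hconv : ∀ i, ConvexOn ℝ Set.univ (p i))
    (hspos : ∀ i, 0 < s i)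
    (hmin : ∀ i t, p i (s i) ≤ p i t)
    (hstrict : ∀ i t, t ≠ s i → p i (s i) < p i t)
    (hscale : ∀ i, p i 0 - p i (s i) = ρ)
    (xstar : E n)
    -- x* ∈ X :
    (hgx : ∀ i, g i xstar ≤ 0) (hhx : ∀ j, h j xstar = 0) (hxnn : ∀ i, 0 ≤ xstar i)
    -- y* := y(x*) :
    (ystar : E n)
    (hy : ∀ i, (xstar i = 0 → ystar i = s i) ∧ (xstar i ≠ 0 → ystar i = 0)) :
    SStat f g h xstar ↔ KKTref f g h p xstar ystar := by
  have hps : ∀ i, deriv (p i) (s i) = 0 := fun i =>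
    IsLocalMin.deriv_eq_zero (Filter.Eventually.of_forall (hmin i))
  constructor
  · rintro ⟨lam, mu, hl0, hlc, hstat⟩
    set A : Fin n → ℝ := fun k => gradient f xstar k + (∑ i, lam i * gradient (g i) xstar k) +
      (∑ j, mu j * gradient (h j) xstar k) with hA
    have hAL : ∀ k, A k = gradient (LSP f g h lam mu) xstar k := fun k =>
      (gradLSP f g h hf hg hh lam mu xstar k).symm
    refine ⟨hgx, hhx, hxnn, ?_, lam, mu, fun _ => 0,
      fun k => if xstar k = 0 then -(A k) / s k else -(deriv (p k) 0) / xstar k,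
      hl0, hlc, fun _ => le_rfl, fun _ => by ring, ?_, ?_⟩
    · intro i
      by_cases hi : xstar i = 0
      · simp [hi]
      · simp [(hy i).2 hi]
    · intro k
      by_cases hk : xstar k = 0
      · have hyk : ystar k = s k := (hy k).1 hk
        have hs : s k ≠ 0 := ne_of_gt (hspos k)
        simp only [hk, if_pos, hyk]
        rw [show gradient f xstar k + (∑ i, lam i * gradient (g i) xstar k) +
          (∑ j, mu j * gradient (h j) xstar k) = A k from rfl]
        field_simp
        ring
      · have hyk : ystar k = 0 := (hy k).2 hk
        have hA0 : A k = 0 := by rw [hAL k]; exact hstat k hk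
        simp only [if_neg hk, hyk]
        rw [show gradient f xstar k + (∑ i, lam i * gradient (g i) xstar k) +
          (∑ j, mu j * gradient (h j) xstar k) = A k from rfl, hA0]
        ring
    · intro i
      by_cases hi : xstar i = 0
      · have hyi : ystar i = s i := (hy i).1 hi
        simp [hi, hyi, hps i]
      · have hyi : ystar i = 0 := (hy i).2 hi
        simp only [if_neg hi, hyi]
        field_simp
        ring
  · rintro ⟨-, -, -, hxy, lam, mu, ν, γ, hl0, hlc, hν0, hνx, hstat, hpγ⟩
    refine ⟨lam, mu, hl0, hlc, fun k hk => ?_⟩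
    rw [gradLSP f g h hf hg hh]
    have hνk : ν k = 0 := by
      rcases mul_eq_zero.mp (hνx k) with h' | h'
      · exact h'
      · exact absurd h' hk
    have hyk : ystar k = 0 := (hy k).2 hk
    have := hstat k
    rw [hνk, hyk] at this
    linarith
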